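/- arXiv:1809.00735 — 3 statements merged into one kernel-verified Lean document; each statement's English description precedes it below -/
import Mathlib

section
/- Fix a constant c > 1. There exists a constant C = C(c) > 0 with the following property: for every real d ≥ 2, every integer p ≥ d, every real a with e^d ≤ a < c·e^{2d}, setting (2a)* = min(2a, c·e^{2d}) and H = p²·φ_{p−2}((2a)*), one has, for all x ∈ [a, (2a)*]: φ_p(x) ≤ C·H, |φ_p'(x)| ≤ C·H·a^{−1}, and |φ_p''(x)| ≤ C·H·a^{−2}. -/
/-- `φ_m(x) = x^{-1/2} (log x - d)^m`. -/
noncomputable def phiR (d : ℝ) (m : ℕ) (x : ℝ) : ℝ :=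
  x ^ (-(1:ℝ)/2) * (Real.log x - d) ^ m

private lemma rpow_sub_one' {x : ℝ} (hx : 0 < x) (q : ℝ) :
    x ^ (q - 1) = x ^ q * x⁻¹ := by
  rw [Real.rpow_sub hx, Real.rpow_one, div_eq_mul_inv]

private lemma phi_hasDerivAt (d : ℝ) (n : ℕ) {x : ℝ} (hx : 0 < x) :
    HasDerivAt (phiR d (n + 2))
      (x ^ (-(3:ℝ)/2) *
        ((n + 2 : ℝ) * (Real.log x - d) ^ (n + 1) - (Real.log x - d) ^ (n + 2) / 2)) x := by
  have h1 : HasDerivAt (fun x : ℝ => x ^ (-(1:ℝ)/2))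
      ((-(1:ℝ)/2) * x ^ ((-(1:ℝ)/2) - 1)) x :=
    Real.hasDerivAt_rpow_const (Or.inl hx.ne')
  have hL : HasDerivAt (fun x : ℝ => Real.log x - d) x⁻¹ x :=
    (Real.hasDerivAt_log hx.ne').sub_const d
  have h2 : HasDerivAt (fun x : ℝ => (Real.log x - d) ^ (n + 2))
      ((n + 2 : ℝ) * (Real.log x - d) ^ (n + 1) * x⁻¹) x := by
    have := hL.fun_pow (n + 2)
    simpa using this
  have h := h1.mul h2
  have e3 : x ^ (-(3:ℝ)/2) = x ^ (-(1:ℝ)/2) * x⁻¹ := by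
    rw [show (-(3:ℝ)/2) = -(1:ℝ)/2 - 1 by norm_num, rpow_sub_one' hx]
  have : HasDerivAt (phiR d (n + 2))
      ((-(1:ℝ)/2) * x ^ ((-(1:ℝ)/2) - 1) * (Real.log x - d) ^ (n + 2)
        + x ^ (-(1:ℝ)/2) * ((n + 2 : ℝ) * (Real.log x - d) ^ (n + 1) * x⁻¹)) x := by
    exact h
  convert this using 1
  rw [show ((-(1:ℝ)/2) - 1) = -(3:ℝ)/2 by norm_num, e3]
  ring

private lemma phi_deriv2 (d : ℝ) (n : ℕ) {x : ℝ} (hx : 0 < x) :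
    HasDerivAt (fun y : ℝ => y ^ (-(3:ℝ)/2) *
        ((n + 2 : ℝ) * (Real.log y - d) ^ (n + 1) - (Real.log y - d) ^ (n + 2) / 2))
      (x ^ (-(5:ℝ)/2) *
        ((n + 2 : ℝ) * (n + 1) * (Real.log x - d) ^ n
          - 2 * (n + 2 : ℝ) * (Real.log x - d) ^ (n + 1)
          + (3/4) * (Real.log x - d) ^ (n + 2))) x := by
  have h1 : HasDerivAt (fun x : ℝ => x ^ (-(3:ℝ)/2))
      ((-(3:ℝ)/2) * x ^ ((-(3:ℝ)/2) - 1)) x :=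
    Real.hasDerivAt_rpow_const (Or.inl hx.ne')
  have hL : HasDerivAt (fun x : ℝ => Real.log x - d) x⁻¹ x :=
    (Real.hasDerivAt_log hx.ne').sub_const d
  have hp1 : HasDerivAt (fun x : ℝ => (Real.log x - d) ^ (n + 1))
      ((n + 1 : ℝ) * (Real.log x - d) ^ n * x⁻¹) x := by
    have := hL.fun_pow (n + 1); simpa using this
  have hp2 : HasDerivAt (fun x : ℝ => (Real.log x - d) ^ (n + 2))
      ((n + 2 : ℝ) * (Real.log x - d) ^ (n + 1) * x⁻¹) x := by
    have := hL.fun_pow (n + 2); simpa using this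
  have hinner : HasDerivAt (fun x : ℝ =>
      (n + 2 : ℝ) * (Real.log x - d) ^ (n + 1) - (Real.log x - d) ^ (n + 2) / 2)
      ((n + 2 : ℝ) * ((n + 1 : ℝ) * (Real.log x - d) ^ n * x⁻¹)
        - (n + 2 : ℝ) * (Real.log x - d) ^ (n + 1) * x⁻¹ / 2) x :=
    (hp1.const_mul _).sub (hp2.div_const 2)
  have h := h1.fun_mul hinner
  refine h.congr_deriv ?_
  have e5 : x ^ (-(5:ℝ)/2) = x ^ (-(3:ℝ)/2) * x⁻¹ := by
    rw [show (-(5:ℝ)/2) = -(3:ℝ)/2 - 1 by norm_num, rpow_sub_one' hx]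
  rw [show ((-(3:ℝ)/2) - 1) = -(5:ℝ)/2 by norm_num, e5]
  ring

set_option maxHeartbeats 2000000 in
theorem stmt2 (c : ℝ) (hc : 1 < c) :
    ∃ C > (0:ℝ), ∀ d : ℝ, 2 ≤ d → ∀ p : ℕ, d ≤ (p : ℝ) → ∀ a : ℝ,
      Real.exp d ≤ a → a < c * Real.exp (2 * d) →
      ∀ x ∈ Set.Icc a (min (2 * a) (c * Real.exp (2 * d))),
        phiR d p x ≤
            C * ((p : ℝ) ^ 2 * phiR d (p - 2) (min (2 * a) (c * Real.exp (2 * d)))) ∧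
        |deriv (phiR d p) x| ≤
            C * ((p : ℝ) ^ 2 * phiR d (p - 2) (min (2 * a) (c * Real.exp (2 * d)))) * a⁻¹ ∧
        |deriv (deriv (phiR d p)) x| ≤
            C * ((p : ℝ) ^ 2 * phiR d (p - 2) (min (2 * a) (c * Real.exp (2 * d)))) * (a ^ 2)⁻¹ := by
  have hlc : 0 < Real.log c := Real.log_pos hc
  have hK1 : (1:ℝ) ≤ 1 + Real.log c := by linarith
  have hKpos : (0:ℝ) < 1 + Real.log c := by linarith
  refine ⟨100 * (1 + Real.log c) ^ 2, by positivity, ?_⟩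
  intro d hd p hp a ha1 ha2 x hx
  set K : ℝ := 1 + Real.log c with hKdef
  -- p ≥ 2
  have hp2 : 2 ≤ p := by exact_mod_cast le_trans hd hp
  obtain ⟨n, rfl⟩ : ∃ n, p = n + 2 := ⟨p - 2, by omega⟩
  set b : ℝ := min (2 * a) (c * Real.exp (2 * d)) with hbdef
  have ha0 : 0 < a := lt_of_lt_of_le (Real.exp_pos d) ha1
  have hb2a : b ≤ 2 * a := min_le_left _ _
  have hbc : b ≤ c * Real.exp (2 * d) := min_le_right _ _
  have hab : a ≤ b := le_min (by linarith) ha2.le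
  have hb0 : 0 < b := lt_of_lt_of_le ha0 hab
  obtain ⟨hx1, hx2⟩ := hx
  have hx0 : 0 < x := lt_of_lt_of_le ha0 hx1
  set L : ℝ := Real.log x - d with hLdef
  set Ls : ℝ := Real.log b - d with hLsdef
  have hL0 : 0 ≤ L := by
    have : d ≤ Real.log x := by
      have h1 : Real.log (Real.exp d) ≤ Real.log x :=
        Real.log_le_log (Real.exp_pos d) (le_trans ha1 hx1)
      rwa [Real.log_exp] at h1
    simp only [hLdef, sub_nonneg]
    exact this
  have hLLs : L ≤ Ls := by
    have := Real.log_le_log hx0 hx2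
    simp only [hLdef, hLsdef]
    linarith only [this]
  have hLs0 : 0 ≤ Ls := le_trans hL0 hLLs
  have hP2 : (2:ℝ) ≤ (n:ℝ) + 2 := by
    have : (0:ℝ) ≤ (n:ℝ) := Nat.cast_nonneg n
    linarith
  have hLsK : Ls ≤ K * ((n:ℝ) + 2) := by
    have hlogb : Real.log b ≤ Real.log c + 2 * d := by
      have h1 : Real.log b ≤ Real.log (c * Real.exp (2 * d)) := Real.log_le_log hb0 hbc
      rwa [Real.log_mul (by linarith) (Real.exp_ne_zero _), Real.log_exp] at h1
    have hdp : d ≤ (n:ℝ) + 2 := by exact_mod_cast hp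
    have hlogc : Real.log c ≤ ((n:ℝ) + 2) * Real.log c := by
      have h2 := mul_le_mul_of_nonneg_right
        (show (1:ℝ) ≤ (n:ℝ) + 2 by linarith only [hP2]) hlc.le
      linarith only [h2]
    simp only [hLsdef, hKdef]
    linarith only [hlogb, hdp, hlogc]
  have hLK : L ≤ K * ((n:ℝ) + 2) := le_trans hLLs hLsK
  -- rpow comparisons
  have hxinv : x⁻¹ ≤ a⁻¹ := by
    apply inv_anti₀ ha0 hx1
  have ht0 : 0 < b ^ (-(1:ℝ)/2) := Real.rpow_pos_of_pos hb0 _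
  have hs2t : x ^ (-(1:ℝ)/2) ≤ 2 * b ^ (-(1:ℝ)/2) := by
    have hb2x : b ≤ 2 * x := by linarith
    have h1 : (2 * x) ^ (-(1:ℝ)/2) ≤ b ^ (-(1:ℝ)/2) :=
      Real.rpow_le_rpow_of_nonpos hb0 hb2x (by norm_num)
    have h2 : (2 * x) ^ (-(1:ℝ)/2) = 2 ^ (-(1:ℝ)/2) * x ^ (-(1:ℝ)/2) :=
      Real.mul_rpow (by norm_num) hx0.le
    have h3 : (1:ℝ)/2 ≤ (2:ℝ) ^ (-(1:ℝ)/2) := by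
      have h4 : (2:ℝ) ^ (-1:ℝ) ≤ (2:ℝ) ^ (-(1:ℝ)/2) :=
        Real.rpow_le_rpow_of_exponent_le one_le_two (by norm_num)
      rw [Real.rpow_neg_one] at h4
      norm_num at h4 ⊢
      linarith
    have hsp : (0:ℝ) ≤ x ^ (-(1:ℝ)/2) := (Real.rpow_pos_of_pos hx0 _).le
    have h5 := mul_le_mul_of_nonneg_right h3 hsp
    rw [h2] at h1
    linarith
  set t : ℝ := b ^ (-(1:ℝ)/2) with htdef
  set s : ℝ := x ^ (-(1:ℝ)/2) with hsdef
  have hs0 : 0 < s := Real.rpow_pos_of_pos hx0 _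
  set M : ℝ := Ls ^ n with hMdef
  have hM0 : 0 ≤ M := pow_nonneg hLs0 n
  have hLnM : L ^ n ≤ M := pow_le_pow_left₀ hL0 hLLs n
  have hLn1 : L ^ (n+1) ≤ K * ((n:ℝ) + 2) * M := by
    calc L ^ (n+1) = L * L ^ n := by ring
      _ ≤ (K * ((n:ℝ) + 2)) * M := by
          apply mul_le_mul hLK hLnM (pow_nonneg hL0 n) (by positivity)
  have hLn2 : L ^ (n+2) ≤ (K * ((n:ℝ) + 2)) ^ 2 * M := by
    calc L ^ (n+2) = L ^ 2 * L ^ n := by ring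
      _ ≤ (K * ((n:ℝ) + 2)) ^ 2 * M := by
          apply mul_le_mul (pow_le_pow_left₀ hL0 hLK 2) hLnM (pow_nonneg hL0 n) (by positivity)
  -- the target quantity
  have hphib : phiR d (n + 2 - 2) b = t * M := by
    simp only [phiR, Nat.add_sub_cancel, hMdef, hLsdef, htdef]
  have hderiv1 : deriv (phiR d (n + 2)) x
      = x ^ (-(3:ℝ)/2) * ((n + 2 : ℝ) * L ^ (n + 1) - L ^ (n + 2) / 2) :=
    (phi_hasDerivAt d n hx0).deriv
  have hderivEq : ∀ y ∈ Set.Ioi (0:ℝ), deriv (phiR d (n + 2)) y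
      = y ^ (-(3:ℝ)/2) * ((n + 2 : ℝ) * (Real.log y - d) ^ (n + 1)
          - (Real.log y - d) ^ (n + 2) / 2) := fun y hy =>
    (phi_hasDerivAt d n hy).deriv
  have hderiv2 : deriv (deriv (phiR d (n + 2))) x
      = x ^ (-(5:ℝ)/2) * ((n + 2 : ℝ) * (n + 1) * L ^ n
          - 2 * (n + 2 : ℝ) * L ^ (n + 1) + (3/4) * L ^ (n + 2)) := by
    have heq : deriv (phiR d (n + 2)) =ᶠ[nhds x]
        (fun y : ℝ => y ^ (-(3:ℝ)/2) * ((n + 2 : ℝ) * (Real.log y - d) ^ (n + 1)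
          - (Real.log y - d) ^ (n + 2) / 2)) := by
      filter_upwards [Ioi_mem_nhds hx0] with y hy
      exact hderivEq y hy
    rw [heq.deriv_eq]
    exact (phi_deriv2 d n hx0).deriv
  have e3 : x ^ (-(3:ℝ)/2) = s * x⁻¹ := by
    rw [show (-(3:ℝ)/2) = -(1:ℝ)/2 - 1 by norm_num, rpow_sub_one' hx0]
  have e5 : x ^ (-(5:ℝ)/2) = s * (x ^ 2)⁻¹ := by
    rw [show (-(5:ℝ)/2) = (-(1:ℝ)/2 - 1) - 1 by norm_num, rpow_sub_one' hx0,
      rpow_sub_one' hx0]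
    rw [sq, mul_inv]
    ring
  have hxinv0 : 0 ≤ x⁻¹ := by positivity
  have hx2inv : (x ^ 2)⁻¹ ≤ (a ^ 2)⁻¹ := by
    have h := pow_le_pow_left₀ ha0.le hx1 2
    exact inv_anti₀ (by positivity) h
  have hainv0 : 0 ≤ a⁻¹ := by positivity
  have ha2inv0 : 0 ≤ (a ^ 2)⁻¹ := by positivity
  clear_value K b L Ls t s M
  refine ⟨?_, ?_, ?_⟩
  · -- bound on phiR itself
    rw [hphib]
    simp only [phiR]
    rw [← hLdef, ← hsdef]
    push_cast
    have h1 : s * L ^ (n + 2) ≤ (2 * t) * ((K * ((n:ℝ) + 2)) ^ 2 * M) := by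
      apply mul_le_mul hs2t hLn2 (pow_nonneg hL0 _) (by positivity)
    have hnn : (0:ℝ) ≤ K ^ 2 * (((n:ℝ) + 2) ^ 2 * (t * M)) := by positivity
    have h2 : (2 * t) * ((K * ((n:ℝ) + 2)) ^ 2 * M)
        ≤ 100 * K ^ 2 * ((((n:ℝ) + 2)) ^ 2 * (t * M)) := by
      have h3 := mul_le_mul_of_nonneg_right (show (2:ℝ) ≤ 100 by norm_num) hnn
      calc (2 * t) * ((K * ((n:ℝ) + 2)) ^ 2 * M)
          = 2 * (K ^ 2 * (((n:ℝ) + 2) ^ 2 * (t * M))) := by ring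
        _ ≤ 100 * (K ^ 2 * (((n:ℝ) + 2) ^ 2 * (t * M))) := h3
        _ = 100 * K ^ 2 * ((((n:ℝ) + 2)) ^ 2 * (t * M)) := by ring
    exact h1.trans h2
  · -- first derivative
    rw [hphib, hderiv1, e3]
    push_cast
    have habs : |s * x⁻¹ * ((n + 2 : ℝ) * L ^ (n + 1) - L ^ (n + 2) / 2)|
        ≤ s * x⁻¹ * ((n + 2 : ℝ) * L ^ (n + 1) + L ^ (n + 2) / 2) := by
      rw [abs_mul]
      have h1 : |s * x⁻¹| = s * x⁻¹ := abs_of_nonneg (by positivity)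
      rw [h1]
      apply mul_le_mul_of_nonneg_left _ (by positivity)
      calc |(n + 2 : ℝ) * L ^ (n + 1) - L ^ (n + 2) / 2|
          ≤ |(n + 2 : ℝ) * L ^ (n + 1)| + |L ^ (n + 2) / 2| := abs_sub _ _
        _ = (n + 2 : ℝ) * L ^ (n + 1) + L ^ (n + 2) / 2 := by
            rw [abs_of_nonneg (by positivity), abs_of_nonneg (by positivity)]
    refine le_trans habs ?_
    have hmain : s * x⁻¹ * ((n + 2 : ℝ) * L ^ (n + 1) + L ^ (n + 2) / 2)
        ≤ (2 * t) * a⁻¹ * ((n + 2 : ℝ) * (K * ((n:ℝ) + 2) * M)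
            + (K * ((n:ℝ) + 2)) ^ 2 * M / 2) := by
      have hfac : (0:ℝ) ≤ (n + 2 : ℝ) * L ^ (n + 1) + L ^ (n + 2) / 2 := by positivity
      have hst : s * x⁻¹ ≤ (2 * t) * a⁻¹ :=
        mul_le_mul hs2t hxinv hxinv0 (by positivity)
      have hpoly : (n + 2 : ℝ) * L ^ (n + 1) + L ^ (n + 2) / 2
          ≤ (n + 2 : ℝ) * (K * ((n:ℝ) + 2) * M) + (K * ((n:ℝ) + 2)) ^ 2 * M / 2 := by
        have := mul_le_mul_of_nonneg_left hLn1 (by positivity : (0:ℝ) ≤ (n + 2 : ℝ))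
        linarith
      apply mul_le_mul hst hpoly hfac (by positivity)
    refine le_trans hmain ?_
    have hZ : (0:ℝ) ≤ ((n:ℝ) + 2) ^ 2 * (t * M) * a⁻¹ := by positivity
    have hK2 : K ≤ K ^ 2 := by
      have := mul_le_mul_of_nonneg_left hK1 hKpos.le
      calc K = K * 1 := by ring
        _ ≤ K * K := this
        _ = K ^ 2 := by ring
    have hcoef : 2 * K + K ^ 2 ≤ 100 * K ^ 2 := by
      linarith only [hK2, sq_nonneg K]
    have h4 := mul_le_mul_of_nonneg_right hcoef hZ
    calc (2 * t) * a⁻¹ * ((n + 2 : ℝ) * (K * ((n:ℝ) + 2) * M)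
            + (K * ((n:ℝ) + 2)) ^ 2 * M / 2)
        = (2 * K + K ^ 2) * (((n:ℝ) + 2) ^ 2 * (t * M) * a⁻¹) := by ring
      _ ≤ (100 * K ^ 2) * (((n:ℝ) + 2) ^ 2 * (t * M) * a⁻¹) := h4
      _ = 100 * K ^ 2 * (((n:ℝ) + 2) ^ 2 * (t * M)) * a⁻¹ := by ring
  · -- second derivative
    rw [hphib, hderiv2, e5]
    push_cast
    have habs : |s * (x ^ 2)⁻¹ * ((n + 2 : ℝ) * (n + 1) * L ^ n
          - 2 * (n + 2 : ℝ) * L ^ (n + 1) + (3/4) * L ^ (n + 2))|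
        ≤ s * (x ^ 2)⁻¹ * ((n + 2 : ℝ) * (n + 1) * L ^ n
          + 2 * (n + 2 : ℝ) * L ^ (n + 1) + (3/4) * L ^ (n + 2)) := by
      rw [abs_mul, abs_of_nonneg (show (0:ℝ) ≤ s * (x ^ 2)⁻¹ by positivity)]
      apply mul_le_mul_of_nonneg_left _ (by positivity)
      calc |(n + 2 : ℝ) * (n + 1) * L ^ n - 2 * (n + 2 : ℝ) * L ^ (n + 1)
            + (3/4) * L ^ (n + 2)|
          ≤ |(n + 2 : ℝ) * (n + 1) * L ^ n - 2 * (n + 2 : ℝ) * L ^ (n + 1)|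
            + |(3/4) * L ^ (n + 2)| := abs_add_le _ _
        _ ≤ |(n + 2 : ℝ) * (n + 1) * L ^ n| + |2 * (n + 2 : ℝ) * L ^ (n + 1)|
            + |(3/4) * L ^ (n + 2)| := by
              have := abs_sub ((n + 2 : ℝ) * (n + 1) * L ^ n)
                (2 * (n + 2 : ℝ) * L ^ (n + 1))
              linarith
        _ = (n + 2 : ℝ) * (n + 1) * L ^ n + 2 * (n + 2 : ℝ) * L ^ (n + 1)
            + (3/4) * L ^ (n + 2) := by
              rw [abs_of_nonneg (by positivity), abs_of_nonneg (by positivity),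
                abs_of_nonneg (by positivity)]
    refine le_trans habs ?_
    have hmain : s * (x ^ 2)⁻¹ * ((n + 2 : ℝ) * (n + 1) * L ^ n
          + 2 * (n + 2 : ℝ) * L ^ (n + 1) + (3/4) * L ^ (n + 2))
        ≤ (2 * t) * (a ^ 2)⁻¹ * ((n + 2 : ℝ) * (n + 2) * M
          + 2 * (n + 2 : ℝ) * (K * ((n:ℝ) + 2) * M)
          + (3/4) * ((K * ((n:ℝ) + 2)) ^ 2 * M)) := by
      have hst : s * (x ^ 2)⁻¹ ≤ (2 * t) * (a ^ 2)⁻¹ :=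
        mul_le_mul hs2t hx2inv (by positivity) (by positivity)
      have hpoly : (n + 2 : ℝ) * (n + 1) * L ^ n + 2 * (n + 2 : ℝ) * L ^ (n + 1)
            + (3/4) * L ^ (n + 2)
          ≤ (n + 2 : ℝ) * (n + 2) * M + 2 * (n + 2 : ℝ) * (K * ((n:ℝ) + 2) * M)
            + (3/4) * ((K * ((n:ℝ) + 2)) ^ 2 * M) := by
        have h1 : (n + 2 : ℝ) * (n + 1) * L ^ n ≤ (n + 2 : ℝ) * (n + 2) * M := by
          have ha := mul_le_mul_of_nonneg_left hLnM
            (by positivity : (0:ℝ) ≤ (n + 2 : ℝ) * (n + 1))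
          have hb' : (n + 2 : ℝ) * (n + 1) * M ≤ (n + 2 : ℝ) * (n + 2) * M := by
            have := mul_le_mul_of_nonneg_right
              (mul_le_mul_of_nonneg_left
                (show ((n:ℝ) + 1) ≤ (n:ℝ) + 2 by linarith only [])
                (by positivity : (0:ℝ) ≤ (n + 2 : ℝ))) hM0
            linarith only [this]
          linarith only [ha, hb']
        have h2 := mul_le_mul_of_nonneg_left hLn1
          (by positivity : (0:ℝ) ≤ 2 * (n + 2 : ℝ))
        have h3 := mul_le_mul_of_nonneg_left hLn2 (by norm_num : (0:ℝ) ≤ (3:ℝ)/4)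
        linarith
      apply mul_le_mul hst hpoly (by positivity) (by positivity)
    refine le_trans hmain ?_
    have hZ : (0:ℝ) ≤ ((n:ℝ) + 2) ^ 2 * (t * M) * (a ^ 2)⁻¹ := by positivity
    have hK2 : K ≤ K ^ 2 := by
      have := mul_le_mul_of_nonneg_left hK1 hKpos.le
      calc K = K * 1 := by ring
        _ ≤ K * K := this
        _ = K ^ 2 := by ring
    have h1K : (1:ℝ) ≤ K ^ 2 := by linarith only [hK1, hK2]
    have hcoef : 2 + 4 * K + (3/2) * K ^ 2 ≤ 100 * K ^ 2 := by
      linarith only [hK2, h1K]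
    have h4 := mul_le_mul_of_nonneg_right hcoef hZ
    calc (2 * t) * (a ^ 2)⁻¹ * ((n + 2 : ℝ) * (n + 2) * M
          + 2 * (n + 2 : ℝ) * (K * ((n:ℝ) + 2) * M)
          + (3/4) * ((K * ((n:ℝ) + 2)) ^ 2 * M))
        = (2 + 4 * K + (3/2) * K ^ 2) * (((n:ℝ) + 2) ^ 2 * (t * M) * (a ^ 2)⁻¹) := by ring
      _ ≤ (100 * K ^ 2) * (((n:ℝ) + 2) ^ 2 * (t * M) * (a ^ 2)⁻¹) := h4
      _ = 100 * K ^ 2 * (((n:ℝ) + 2) ^ 2 * (t * M)) * (a ^ 2)⁻¹ := by ring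
end

section
/- Let d be a real number and p a positive integer with 0 < d ≤ p, let c > 1, and let g_p(x) = (log x − d)^p. Then for every integer k ≥ 0 and every real x ≥ c·e^{2d}, the k-th derivative of g_p satisfies |g_p^{(k)}(x)| ≤ k!·(p/d)^k·x^{−k}·(log x − d)^p. -/
noncomputable def aa (p : ℕ) : ℕ → ℕ → ℝ
  | 0, 0 => 1
  | 0, _+1 => 0
  | k+1, 0 => -(k:ℝ) * aa p k 0
  | k+1, j+1 => ((p - j : ℕ) : ℝ) * aa p k j - (k:ℝ) * aa p k (j+1)

lemma aa_zero_of_lt (p : ℕ) : ∀ k j : ℕ, k < j → aa p k j = 0 := by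
  intro k
  induction k with
  | zero =>
    intro j h
    cases j with
    | zero => omega
    | succ j => rfl
  | succ k ih =>
    intro j h
    cases j with
    | zero => omega
    | succ j =>
      rw [aa, ih j (by omega), ih (j+1) (by omega)]
      ring

lemma aa_zero_of_p_lt (p : ℕ) : ∀ k j : ℕ, p < j → aa p k j = 0 := by
  intro k
  induction k with
  | zero =>
    intro j h
    cases j with
    | zero => omega
    | succ j => rfl
  | succ k ih =>
    intro j h
    cases j with
    | zero => omega
    | succ j =>
      have h2 : p - j = 0 := by omega
      rw [aa, h2, ih (j+1) h]
      simp

noncomputable def QQ (p k : ℕ) (u : ℝ) : ℝ :=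
  ∑ j ∈ Finset.range (k+1), aa p k j * u ^ (p - j)

lemma QQ_succ (p k : ℕ) (u : ℝ) :
    QQ p (k+1) u = (∑ j ∈ Finset.range (k+1), ((p - j : ℕ) : ℝ) * aa p k j * u ^ (p - j - 1))
      - (k:ℝ) * QQ p k u := by
  have h0 : aa p k (k+1) = 0 := aa_zero_of_lt p k (k+1) (by omega)
  unfold QQ
  rw [Finset.sum_range_succ' (fun j => aa p (k+1) j * u ^ (p - j)) (k+1),
      Finset.sum_range_succ' (fun j => aa p k j * u ^ (p - j)) k]
  simp only [aa, Nat.sub_zero]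
  have hext : ∑ j ∈ Finset.range k, aa p k (j+1) * u ^ (p - (j+1))
      = ∑ j ∈ Finset.range (k+1), aa p k (j+1) * u ^ (p - (j+1)) := by
    rw [Finset.sum_range_succ, h0]
    ring
  rw [hext]
  rw [mul_add, Finset.mul_sum, Finset.sum_congr rfl (fun j _ => by
    show ((((p - j : ℕ) : ℝ) * aa p k j - (k:ℝ) * aa p k (j+1)) * u ^ (p - (j+1)))
      = ((p - j : ℕ) : ℝ) * aa p k j * u ^ (p - j - 1) - (k:ℝ) * (aa p k (j+1) * u ^ (p - (j+1)))
    rw [Nat.sub_sub]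
    ring), Finset.sum_sub_distrib]
  ring

lemma S_bound (p : ℕ) (d : ℝ) (hd : 0 < d) (hdp : d ≤ (p:ℝ)) (k : ℕ) :
    ∑ j ∈ Finset.range (k+1), |aa p k j| * d ^ (k - j)
      ≤ (Nat.factorial k : ℝ) * (p:ℝ) ^ k := by
  induction k with
  | zero => simp [aa]
  | succ k ih =>
    have hp0 : (0:ℝ) < p := lt_of_lt_of_le hd hdp
    have h0 : aa p k (k+1) = 0 := aa_zero_of_lt p k (k+1) (by omega)
    rw [Finset.sum_range_succ' (fun j => |aa p (k+1) j| * d ^ (k+1 - j)) (k+1)]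
    have hstep : ∀ j ∈ Finset.range (k+1),
        |aa p (k+1) (j+1)| * d ^ (k+1 - (j+1))
          ≤ ((p:ℝ) * |aa p k j| + (k:ℝ) * |aa p k (j+1)|) * d ^ (k - j) := by
      intro j hj
      have he : k+1 - (j+1) = k - j := by omega
      rw [he]
      have habs : |aa p (k+1) (j+1)| ≤ (p:ℝ) * |aa p k j| + (k:ℝ) * |aa p k (j+1)| := by
        rw [aa]
        refine le_trans (abs_sub _ _) (add_le_add ?_ ?_)
        · rw [abs_mul, Nat.abs_cast]
          gcongr
          exact_mod_cast Nat.sub_le p j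
        · rw [abs_mul, Nat.abs_cast]
      exact mul_le_mul_of_nonneg_right habs (by positivity)
    have key : ∑ j ∈ Finset.range (k+1), |aa p k (j+1)| * d ^ (k - j) + |aa p k 0| * d ^ (k+1)
        = d * ∑ j ∈ Finset.range (k+1), |aa p k j| * d ^ (k - j) := by
      rw [Finset.sum_range_succ (fun j => |aa p k (j+1)| * d ^ (k - j)) k, h0]
      rw [Finset.mul_sum, Finset.sum_range_succ' (fun j => d * (|aa p k j| * d ^ (k - j))) k]
      rw [Finset.sum_congr rfl (fun j hj => by
        show |aa p k (j+1)| * d ^ (k - j) = d * (|aa p k (j+1)| * d ^ (k - (j+1)))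
        have : k - j = (k - (j+1)) + 1 := by
          simp only [Finset.mem_range] at hj; omega
        rw [this, pow_succ]; ring)]
      simp only [abs_zero, Nat.sub_zero]
      ring
    calc ∑ j ∈ Finset.range (k+1), |aa p (k+1) (j+1)| * d ^ (k+1 - (j+1))
          + |aa p (k+1) 0| * d ^ (k+1 - 0)
        ≤ ∑ j ∈ Finset.range (k+1), ((p:ℝ) * |aa p k j| + (k:ℝ) * |aa p k (j+1)|) * d ^ (k - j)
          + (k:ℝ) * |aa p k 0| * d ^ (k+1) := by
          refine add_le_add (Finset.sum_le_sum hstep) (le_of_eq ?_)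
          rw [aa, abs_mul, abs_neg, Nat.abs_cast, Nat.sub_zero]
      _ = (p:ℝ) * (∑ j ∈ Finset.range (k+1), |aa p k j| * d ^ (k - j))
          + (k:ℝ) * (∑ j ∈ Finset.range (k+1), |aa p k (j+1)| * d ^ (k - j)
              + |aa p k 0| * d ^ (k+1)) := by
          simp only [add_mul, Finset.sum_add_distrib, Finset.mul_sum, mul_add, mul_assoc]
          ring
      _ = (p:ℝ) * (∑ j ∈ Finset.range (k+1), |aa p k j| * d ^ (k - j))
          + (k:ℝ) * d * (∑ j ∈ Finset.range (k+1), |aa p k j| * d ^ (k - j)) := by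
          rw [key]; ring
      _ ≤ (p:ℝ) * ((Nat.factorial k : ℝ) * (p:ℝ)^k)
          + (k:ℝ) * (p:ℝ) * ((Nat.factorial k : ℝ) * (p:ℝ)^k) := by
          have hS0 : (0:ℝ) ≤ ∑ j ∈ Finset.range (k+1), |aa p k j| * d ^ (k - j) :=
            Finset.sum_nonneg (fun j _ => by positivity)
          gcongr
          all_goals first | exact hS0 | exact ih | positivity
      _ = (Nat.factorial (k+1) : ℝ) * (p:ℝ)^(k+1) := by
          rw [Nat.factorial_succ]
          push_cast
          ring

lemma QQ_bound (p : ℕ) (d : ℝ) (hd : 0 < d) (hdp : d ≤ (p:ℝ)) (k : ℕ) (u : ℝ) (hu : d ≤ u) :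
    |QQ p k u| ≤ (Nat.factorial k : ℝ) * ((p:ℝ)/d) ^ k * u ^ p := by
  have hu0 : 0 < u := lt_of_lt_of_le hd hu
  have hterm : ∀ j ∈ Finset.range (k+1),
      |aa p k j * u ^ (p - j)| ≤ |aa p k j| * d ^ (k - j) * (u ^ p / d ^ k) := by
    intro j hj
    simp only [Finset.mem_range] at hj
    rw [abs_mul, abs_pow, abs_of_pos hu0]
    by_cases hjp : j ≤ p
    · have h1 : u ^ (p - j) * d ^ k ≤ d ^ (k - j) * u ^ p := by
        have e1 : d ^ k = d ^ (k - j) * d ^ j := by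
          rw [← pow_add]; congr 1; omega
        have e2 : u ^ p = u ^ (p - j) * u ^ j := by
          rw [← pow_add]; congr 1; omega
        rw [e1, e2]
        calc u ^ (p - j) * (d ^ (k - j) * d ^ j)
            ≤ u ^ (p - j) * (d ^ (k - j) * u ^ j) := by gcongr
          _ = d ^ (k - j) * (u ^ (p - j) * u ^ j) := by ring
      have h2 : u ^ (p - j) ≤ d ^ (k - j) * u ^ p / d ^ k := by
        rw [le_div_iff₀ (by positivity)]
        linarith [h1]
      calc |aa p k j| * u ^ (p - j) ≤ |aa p k j| * (d ^ (k - j) * u ^ p / d ^ k) := by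
            gcongr
        _ = |aa p k j| * d ^ (k - j) * (u ^ p / d ^ k) := by ring
    · rw [aa_zero_of_p_lt p k j (by omega)]
      simp only [abs_zero, zero_mul]
      positivity
  calc |QQ p k u| ≤ ∑ j ∈ Finset.range (k+1), |aa p k j * u ^ (p - j)| :=
        Finset.abs_sum_le_sum_abs _ _
    _ ≤ ∑ j ∈ Finset.range (k+1), |aa p k j| * d ^ (k - j) * (u ^ p / d ^ k) :=
        Finset.sum_le_sum hterm
    _ = (∑ j ∈ Finset.range (k+1), |aa p k j| * d ^ (k - j)) * (u ^ p / d ^ k) := by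
        rw [Finset.sum_mul]
    _ ≤ ((Nat.factorial k : ℝ) * (p:ℝ) ^ k) * (u ^ p / d ^ k) := by
        have := S_bound p d hd hdp k
        gcongr
    _ = (Nat.factorial k : ℝ) * ((p:ℝ)/d) ^ k * u ^ p := by
        rw [div_pow]
        field_simp

lemma pow_pred_helper (x : ℝ) (hx : x ≠ 0) (k : ℕ) : (k:ℝ) * x^(k-1) = (k:ℝ) * x^k / x := by
  cases k with
  | zero => simp
  | succ k =>
    rw [pow_succ]
    push_cast
    field_simp

lemma QQ_hasDeriv (p : ℕ) (d : ℝ) (k : ℕ) (x : ℝ) (hx : 0 < x) :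
    HasDerivAt (fun y => QQ p k (Real.log y - d) / y ^ k)
      (QQ p (k+1) (Real.log x - d) / x ^ (k+1)) x := by
  have hx' : x ≠ 0 := hx.ne'
  have hlog : HasDerivAt (fun y : ℝ => Real.log y - d) x⁻¹ x :=
    (Real.hasDerivAt_log hx').sub_const d
  have hsum : HasDerivAt (fun y => QQ p k (Real.log y - d))
      (∑ j ∈ Finset.range (k+1),
        aa p k j * ((p - j : ℕ) * (Real.log x - d) ^ (p - j - 1) * x⁻¹)) x := by
    unfold QQ
    exact HasDerivAt.fun_sum (fun j _ => ((hlog.pow (p - j)).const_mul (aa p k j)))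
  have hpow : HasDerivAt (fun y : ℝ => y ^ k) ((k:ℝ) * x ^ (k-1)) x := hasDerivAt_pow k x
  have hdiv := hsum.div hpow (pow_ne_zero k hx')
  refine hdiv.congr_deriv ?_
  rw [QQ_succ]
  set u := Real.log x - d
  have hS : ∑ j ∈ Finset.range (k+1), aa p k j * (((p - j : ℕ):ℝ) * u ^ (p - j - 1) * x⁻¹)
      = (∑ j ∈ Finset.range (k+1), ((p - j : ℕ):ℝ) * aa p k j * u ^ (p - j - 1)) * x⁻¹ := by
    rw [Finset.sum_mul]
    exact Finset.sum_congr rfl (fun j _ => by ring)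
  rw [hS, pow_pred_helper x hx' k]
  field_simp
  ring

lemma QQ_formula (p : ℕ) (d : ℝ) (k : ℕ) :
    ∀ x ∈ Set.Ioi (0:ℝ), iteratedDeriv k (fun y : ℝ => (Real.log y - d) ^ p) x
      = QQ p k (Real.log x - d) / x ^ k := by
  induction k with
  | zero =>
    intro x hx
    simp [QQ, aa]
  | succ k ih =>
    intro x hx
    rw [iteratedDeriv_succ]
    have hev : iteratedDeriv k (fun y : ℝ => (Real.log y - d) ^ p)
        =ᶠ[nhds x] fun y => QQ p k (Real.log y - d) / y ^ k :=
      Filter.eventuallyEq_of_mem (isOpen_Ioi.mem_nhds hx) ih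
    rw [hev.deriv_eq, (QQ_hasDeriv p d k x hx).deriv]

theorem stmt4 (d : ℝ) (hd : 0 < d) (p : ℕ) (hp : 1 ≤ p) (hdp : d ≤ (p : ℝ))
    (c : ℝ) (hc : 1 < c) (k : ℕ) (x : ℝ) (hx : c * Real.exp (2 * d) ≤ x) :
    |iteratedDeriv k (fun y : ℝ => (Real.log y - d) ^ p) x| ≤
      (k.factorial : ℝ) * ((p : ℝ) / d) ^ k * (Real.log x - d) ^ p / x ^ k := by
  have hce : (0:ℝ) < c * Real.exp (2 * d) := by positivity
  have hx0 : 0 < x := lt_of_lt_of_le hce hx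
  have hlogx : 2 * d ≤ Real.log x := by
    calc 2 * d = Real.log (Real.exp (2 * d)) := (Real.log_exp _).symm
      _ ≤ Real.log (c * Real.exp (2 * d)) := by
          apply Real.log_le_log (Real.exp_pos _)
          nlinarith [Real.exp_pos (2 * d)]
      _ ≤ Real.log x := Real.log_le_log hce hx
  have hu : d ≤ Real.log x - d := by linarith
  rw [QQ_formula p d k x hx0, abs_div, abs_of_pos (pow_pos hx0 k)]
  gcongr
  exact QQ_bound p d hd hdp k _ hu
end

section
/- Fix a constant c > 1. There exist constants C > 0 and d₀ > 0 such that for all real d ≥ d₀ and all integers m with m ≥ d − 2, one has γ(m+1, d/2 + (log c)/2) ≤ C·e^{−d/2}·2^{−m}·c^{m/d}·d^{m+1}/m. -/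
open Real intervalIntegral

lemma exp_int (β x : ℝ) (hβ : β ≠ 0) :
    (∫ u in (0:ℝ)..x, Real.exp (β * u)) = (Real.exp (β * x) - 1) / β := by
  rw [intervalIntegral.integral_comp_mul_left (fun t => Real.exp t) hβ]
  simp [integral_exp, smul_eq_mul, div_eq_inv_mul]

lemma key (m : ℕ) (x : ℝ) (hx : 0 < x) (hm : x < m) :
    (∫ u in (0:ℝ)..x, Real.exp (-u) * u ^ m) ≤ Real.exp (-x) * x ^ (m+1) / ((m:ℝ) - x) := by
  have hβ0 : (0:ℝ) < m / x - 1 := by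
    have : (1:ℝ) < m / x := (one_lt_div hx).2 hm
    linarith
  set β : ℝ := m / x - 1 with hβdef
  have hβ : 0 < β := hβ0
  have step1 : (∫ u in (0:ℝ)..x, Real.exp (-u) * u ^ m)
      ≤ ∫ u in (0:ℝ)..x, x ^ m * Real.exp (-(m:ℝ)) * Real.exp (β * u) := by
    apply intervalIntegral.integral_mono_on hx.le
    · apply ContinuousOn.intervalIntegrable; fun_prop
    · apply ContinuousOn.intervalIntegrable; fun_prop
    · intro u hu
      have hu0 : 0 ≤ u := hu.1
      have h1 : u ≤ x * Real.exp (u / x - 1) := by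
        have := Real.add_one_le_exp (u / x - 1)
        have h2 : u / x ≤ Real.exp (u / x - 1) := by linarith
        calc u = x * (u / x) := by field_simp
        _ ≤ x * Real.exp (u / x - 1) := by nlinarith
      have h2 : u ^ m ≤ (x * Real.exp (u / x - 1)) ^ m := pow_le_pow_left₀ hu0 h1 m
      calc Real.exp (-u) * u ^ m ≤ Real.exp (-u) * (x * Real.exp (u / x - 1)) ^ m := by
            have := Real.exp_pos (-u); nlinarith
      _ = x ^ m * Real.exp (-(m:ℝ)) * Real.exp (β * u) := by
            rw [mul_pow, ← Real.exp_nat_mul]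
            rw [show Real.exp (-u) * (x ^ m * Real.exp ((m:ℝ) * (u / x - 1)))
                = x ^ m * Real.exp (-u + (m:ℝ) * (u / x - 1)) from by rw [Real.exp_add]; ring]
            rw [mul_assoc, ← Real.exp_add]
            congr 1
            rw [hβdef]
            ring
  have step2 : (∫ u in (0:ℝ)..x, x ^ m * Real.exp (-(m:ℝ)) * Real.exp (β * u))
      = x ^ m * Real.exp (-(m:ℝ)) * ((Real.exp (β * x) - 1) / β) := by
    rw [intervalIntegral.integral_const_mul, exp_int β x hβ.ne']
  have hbx : β * x = (m:ℝ) - x := by rw [hβdef]; field_simp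
  have hβx : β = ((m:ℝ) - x) / x := by rw [hβdef]; field_simp
  have hmx : 0 < (m:ℝ) - x := by linarith
  have step3 : x ^ m * Real.exp (-(m:ℝ)) * ((Real.exp (β * x) - 1) / β)
      ≤ Real.exp (-x) * x ^ (m+1) / ((m:ℝ) - x) := by
    rw [hbx, hβx, div_div_eq_mul_div, ← mul_div_assoc]
    have keyineq : x ^ m * Real.exp (-(m:ℝ)) * ((Real.exp ((m:ℝ) - x) - 1) * x)
        ≤ Real.exp (-x) * x ^ (m+1) := by
      rw [pow_succ]
      have h : Real.exp (-(m:ℝ)) * (Real.exp ((m:ℝ) - x) - 1) ≤ Real.exp (-x) := by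
        rw [mul_sub, ← Real.exp_add]
        have := Real.exp_pos (-(m:ℝ))
        have h2 : -(m:ℝ) + ((m:ℝ) - x) = -x := by ring
        rw [h2]; linarith
      calc x ^ m * Real.exp (-(m:ℝ)) * ((Real.exp ((m:ℝ) - x) - 1) * x)
          = (Real.exp (-(m:ℝ)) * (Real.exp ((m:ℝ) - x) - 1)) * (x ^ m * x) := by ring
      _ ≤ Real.exp (-x) * (x ^ m * x) :=
          mul_le_mul_of_nonneg_right h (by positivity)
    gcongr
  exact (step1.trans_eq step2).trans step3

theorem stmt15 (c : ℝ) (hc : 1 < c) :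
    ∃ C > (0:ℝ), ∃ d₀ > (0:ℝ), ∀ d : ℝ, d₀ ≤ d → ∀ m : ℕ, d - 2 ≤ (m : ℝ) →
      (∫ u in (0:ℝ)..(d / 2 + Real.log c / 2), Real.exp (-u) * u ^ m) ≤
        C * Real.exp (-d / 2) * ((2:ℝ) ^ m)⁻¹ * c ^ ((m : ℝ) / d) * d ^ (m + 1) / (m : ℝ) := by
  have hlc : 0 < Real.log c := Real.log_pos hc
  have hc0 : (0:ℝ) < c := by linarith
  refine ⟨2*c, by linarith, 6 + 2*Real.log c, by linarith, ?_⟩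
  intro d hd m hm
  have hd6 : (6:ℝ) ≤ d := by linarith
  have hd0 : (0:ℝ) < d := by linarith
  set x : ℝ := d / 2 + Real.log c / 2 with hxdef
  have hx : 0 < x := by rw [hxdef]; linarith
  have hm4 : (4:ℝ) + 2 * Real.log c ≤ (m:ℝ) := by linarith
  have hmpos : (0:ℝ) < (m:ℝ) := by linarith
  have hq : (m:ℝ) / 4 ≤ (m:ℝ) - x := by rw [hxdef]; linarith
  have hmx : x < (m:ℝ) := by rw [hxdef]; rw [hxdef] at hq; linarith
  have hkey := key m x hx hmx
  have hxpow : x ^ (m+1) ≤ (d/2) ^ (m+1) * (c ^ ((m:ℝ)/d) * c) := by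
    have hfac : x = (d/2) * (1 + Real.log c / d) := by rw [hxdef]; field_simp
    rw [hfac, mul_pow]
    have e1 : (1 + Real.log c / d) ≤ Real.exp (Real.log c / d) := by
      have := Real.add_one_le_exp (Real.log c / d); linarith
    have e2 : (1 + Real.log c / d) ^ (m+1) ≤ Real.exp (Real.log c / d) ^ (m+1) :=
      pow_le_pow_left₀ (by positivity) e1 _
    have e3 : Real.exp (Real.log c / d) ^ (m+1) = c ^ (((m:ℝ)+1)/d) := by
      rw [← Real.exp_nat_mul, Real.rpow_def_of_pos hc0]
      congr 1
      push_cast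
      ring
    have e4 : c ^ (((m:ℝ)+1)/d) = c ^ ((m:ℝ)/d) * c ^ ((1:ℝ)/d) := by
      rw [← Real.rpow_add hc0]; congr 1; ring
    have e5 : c ^ ((1:ℝ)/d) ≤ c := by
      calc c ^ ((1:ℝ)/d) ≤ c ^ (1:ℝ) :=
            Real.rpow_le_rpow_of_exponent_le hc.le (by rw [div_le_one hd0]; linarith)
      _ = c := Real.rpow_one c
    have e6 : (1 + Real.log c / d) ^ (m+1) ≤ c ^ ((m:ℝ)/d) * c := by
      refine (e2.trans_eq (e3.trans e4)).trans ?_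
      exact mul_le_mul_of_nonneg_left e5 (Real.rpow_nonneg hc0.le _)
    have hdp : (0:ℝ) ≤ (d/2) ^ (m+1) := by positivity
    exact mul_le_mul_of_nonneg_left e6 hdp
  have hex : Real.exp (-x) ≤ Real.exp (-d/2) := by
    apply Real.exp_le_exp.2
    rw [hxdef]; linarith
  calc (∫ u in (0:ℝ)..x, Real.exp (-u) * u ^ m)
      ≤ Real.exp (-x) * x ^ (m+1) / ((m:ℝ) - x) := hkey
  _ ≤ Real.exp (-x) * x ^ (m+1) / ((m:ℝ)/4) := by
      gcongr
  _ ≤ Real.exp (-d/2) * ((d/2) ^ (m+1) * (c ^ ((m:ℝ)/d) * c)) / ((m:ℝ)/4) := by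
      gcongr
  _ = 2*c * Real.exp (-d / 2) * ((2:ℝ) ^ m)⁻¹ * c ^ ((m : ℝ) / d) * d ^ (m + 1) / (m : ℝ) := by
      rw [div_pow]
      have h2 : ((2:ℝ)) ^ (m+1) = 2 ^ m * 2 := pow_succ 2 m
      rw [h2]
      field_simp
      ring
end
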